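/- arXiv:2403.05096 — 2 statements merged into one kernel-verified Lean document; each statement's English description precedes it below -/
import Mathlib

section
/- The system is globally solvable at the Fourier coefficient level if and only if the Diophantine condition (DC) holds. -/
open Real

/-- Euclidean norm of an integer vector `τ ∈ ℤ^m`. -/
noncomputable def eNormZ {m : ℕ} (τ : Fin m → ℤ) : ℝ :=
  Real.sqrt (∑ i, ((τ i : ℝ)) ^ 2)

/-- The weight `w(τ,j) = ‖τ‖^(1/σ) + j^(1/(2nμ))`. -/
noncomputable def wgt (m n : ℕ) (σ μ : ℝ) (τ : Fin m → ℤ) (j : ℕ) : ℝ :=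
  eNormZ τ ^ (1 / σ) + (j : ℝ) ^ (1 / (2 * n * μ))

/-- GS-decay: `|a(τ,j)| ≤ C exp(-ε w(τ,j))` for some `C, ε > 0`. -/
def GSDecay (m n : ℕ) (σ μ : ℝ) (a : (Fin m → ℤ) → ℕ → ℂ) : Prop :=
  ∃ C > 0, ∃ ε > 0, ∀ τ j, ‖a τ j‖ ≤ C * Real.exp (-ε * wgt m n σ μ τ j)

/-- GS-growth: for all `ε > 0` there is `C > 0` with `|a(τ,j)| ≤ C exp(ε w(τ,j))`. -/
def GSGrowth (m n : ℕ) (σ μ : ℝ) (a : (Fin m → ℤ) → ℕ → ℂ) : Prop :=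
  ∀ ε > 0, ∃ C > 0, ∀ τ j, ‖a τ j‖ ≤ C * Real.exp (ε * wgt m n σ μ τ j)

/-- Symbol of the operator `L_r = Q_r(D_t) + d_r P(x,D_x)`: `σ_r(τ,j) = Q_r(τ) + d_r λ_j`. -/
noncomputable def symb {m ℓ : ℕ} (Q : Fin ℓ → MvPolynomial (Fin m) ℂ)
    (d : Fin ℓ → ℂ) (lam : ℕ → ℝ) (r : Fin ℓ) (τ : Fin m → ℤ) (j : ℕ) : ℂ :=
  MvPolynomial.eval (fun i => ((τ i : ℂ))) (Q r) + d r * (lam j : ℂ)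

/-- `‖σ(τ,j)‖ = max_{1 ≤ r ≤ ℓ} |σ_r(τ,j)|`. -/
noncomputable def symbNorm {m ℓ : ℕ} (Q : Fin ℓ → MvPolynomial (Fin m) ℂ)
    (d : Fin ℓ → ℂ) (lam : ℕ → ℝ) (τ : Fin m → ℤ) (j : ℕ) : ℝ :=
  ⨆ r : Fin ℓ, ‖symb Q d lam r τ j‖

/-- The Diophantine condition (DC). -/
def DioCond (m n ℓ : ℕ) (σ μ : ℝ) (Q : Fin ℓ → MvPolynomial (Fin m) ℂ)
    (d : Fin ℓ → ℂ) (lam : ℕ → ℝ) : Prop :=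
  ∀ ε > 0, ∃ C > 0, ∀ τ j, symbNorm Q d lam τ j ≠ 0 →
    symbNorm Q d lam τ j ≥ C * Real.exp (-ε * wgt m n σ μ τ j)

/-- Global hypoellipticity at the Fourier coefficient level. -/
def GloballyHypoelliptic (m n ℓ : ℕ) (σ μ : ℝ) (Q : Fin ℓ → MvPolynomial (Fin m) ℂ)
    (d : Fin ℓ → ℂ) (lam : ℕ → ℝ) : Prop :=
  ∀ u : (Fin m → ℤ) → ℕ → ℂ, GSGrowth m n σ μ u →
    (∀ r : Fin ℓ, GSDecay m n σ μ (fun τ j => symb Q d lam r τ j * u τ j)) →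
    GSDecay m n σ μ u

/-- Admissible families (compatibility conditions). -/
def Admissible {m ℓ : ℕ} (Q : Fin ℓ → MvPolynomial (Fin m) ℂ) (d : Fin ℓ → ℂ)
    (lam : ℕ → ℝ) (f : Fin ℓ → (Fin m → ℤ) → ℕ → ℂ) : Prop :=
  (∀ r s τ j, symb Q d lam r τ j * f s τ j = symb Q d lam s τ j * f r τ j) ∧
  (∀ r τ j, symb Q d lam r τ j = 0 → f r τ j = 0)

/-- Global solvability at the Fourier coefficient level. -/
def GloballySolvable (m n ℓ : ℕ) (σ μ : ℝ) (Q : Fin ℓ → MvPolynomial (Fin m) ℂ)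
    (d : Fin ℓ → ℂ) (lam : ℕ → ℝ) : Prop :=
  ∀ f : Fin ℓ → (Fin m → ℤ) → ℕ → ℂ, Admissible Q d lam f →
    (∀ r, GSGrowth m n σ μ (f r)) →
    ∃ u : (Fin m → ℤ) → ℕ → ℂ, GSGrowth m n σ μ u ∧
      ∀ r τ j, symb Q d lam r τ j * u τ j = f r τ j


lemma wgt_nonneg (m n : ℕ) (σ μ : ℝ) (τ : Fin m → ℤ) (j : ℕ) : 0 ≤ wgt m n σ μ τ j :=
  add_nonneg (Real.rpow_nonneg (Real.sqrt_nonneg _) _)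
    (Real.rpow_nonneg (by positivity) _)

lemma abs_symb_le_symbNorm {m ℓ : ℕ} (Q : Fin ℓ → MvPolynomial (Fin m) ℂ)
    (d : Fin ℓ → ℂ) (lam : ℕ → ℝ) (r : Fin ℓ) (τ : Fin m → ℤ) (j : ℕ) :
    ‖symb Q d lam r τ j‖ ≤ symbNorm Q d lam τ j :=
  le_ciSup (f := fun r => ‖symb Q d lam r τ j‖) (Set.finite_range _).bddAbove r

lemma symbNorm_nonneg {m ℓ : ℕ} (hℓ : 0 < ℓ) (Q : Fin ℓ → MvPolynomial (Fin m) ℂ)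
    (d : Fin ℓ → ℂ) (lam : ℕ → ℝ) (τ : Fin m → ℤ) (j : ℕ) :
    0 ≤ symbNorm Q d lam τ j :=
  le_trans (norm_nonneg _) (abs_symb_le_symbNorm Q d lam ⟨0, hℓ⟩ τ j)

lemma symbNorm_attained {m ℓ : ℕ} (hℓ : 0 < ℓ) (Q : Fin ℓ → MvPolynomial (Fin m) ℂ)
    (d : Fin ℓ → ℂ) (lam : ℕ → ℝ) (τ : Fin m → ℤ) (j : ℕ) :
    ∃ r, ‖symb Q d lam r τ j‖ = symbNorm Q d lam τ j := by
  haveI : Nonempty (Fin ℓ) := ⟨⟨0, hℓ⟩⟩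
  obtain ⟨r, hr⟩ := Finite.exists_max fun r => ‖symb Q d lam r τ j‖
  exact ⟨r, le_antisymm (abs_symb_le_symbNorm Q d lam r τ j) (ciSup_le hr)⟩

/-- global solvability ⟺ (DC). -/
theorem statement1 (m n ℓ : ℕ) (hm : 1 ≤ m) (hn : 1 ≤ n) (hℓ : 1 ≤ ℓ)
    (σ μ : ℝ) (hσ : 1 ≤ σ) (hμ : 1 / 2 ≤ μ)
    (Q : Fin ℓ → MvPolynomial (Fin m) ℂ) (d : Fin ℓ → ℂ) (lam : ℕ → ℝ) :
    GloballySolvable m n ℓ σ μ Q d lam ↔ DioCond m n ℓ σ μ Q d lam := by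
  have hℓ0 : 0 < ℓ := hℓ
  obtain ⟨Rr, hRr⟩ := Classical.axiomOfChoice (fun p : (Fin m → ℤ) × ℕ =>
    symbNorm_attained hℓ0 Q d lam p.1 p.2)
  constructor
  · -- Solvable → DC
    intro hsolv ε hε
    set e2 := ε / 2 with he2
    have he2pos : 0 < e2 := by positivity
    -- the test family
    set g : (Fin m → ℤ) → ℕ → ℂ := fun τ j =>
      ((Real.exp (-(e2) * wgt m n σ μ τ j) / symbNorm Q d lam τ j : ℝ) : ℂ) with hg
    set f : Fin ℓ → (Fin m → ℤ) → ℕ → ℂ := fun r τ j => symb Q d lam r τ j * g τ j with hf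
    have hadm : Admissible Q d lam f := by
      constructor
      · intro r s τ j; simp only [hf]; ring
      · intro r τ j h; simp [hf, h]
    have hfb : ∀ r τ j, ‖f r τ j‖ ≤ 1 := by
      intro r τ j
      by_cases hz : symbNorm Q d lam τ j = 0
      · have : ‖symb Q d lam r τ j‖ = 0 := le_antisymm
          (hz ▸ abs_symb_le_symbNorm Q d lam r τ j) (norm_nonneg _)
        simp [hf, norm_eq_zero.mp this]
      · have hpos : 0 < symbNorm Q d lam τ j :=
          lt_of_le_of_ne (symbNorm_nonneg hℓ0 Q d lam τ j) (Ne.symm hz)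
        have : ‖f r τ j‖
            = ‖symb Q d lam r τ j‖ *
              (Real.exp (-(e2) * wgt m n σ μ τ j) / symbNorm Q d lam τ j) := by
          simp only [hf, hg, norm_mul, Complex.norm_real, Real.norm_eq_abs]
          rw [abs_of_nonneg (by positivity)]
        rw [this]
        calc ‖symb Q d lam r τ j‖ *
              (Real.exp (-(e2) * wgt m n σ μ τ j) / symbNorm Q d lam τ j)
            ≤ symbNorm Q d lam τ j *
              (Real.exp (-(e2) * wgt m n σ μ τ j) / symbNorm Q d lam τ j) := by
              apply mul_le_mul_of_nonneg_right (abs_symb_le_symbNorm Q d lam r τ j)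
              positivity
          _ = Real.exp (-(e2) * wgt m n σ μ τ j) := by field_simp
          _ ≤ 1 := by
              rw [Real.exp_le_one_iff]
              have := wgt_nonneg m n σ μ τ j
              nlinarith
    have hfg : ∀ r, GSGrowth m n σ μ (f r) := by
      intro r ε' hε'
      refine ⟨1, one_pos, fun τ j => ?_⟩
      have h1 : (1:ℝ) ≤ Real.exp (ε' * wgt m n σ μ τ j) := by
        rw [Real.one_le_exp_iff]
        exact mul_nonneg hε'.le (wgt_nonneg m n σ μ τ j)
      calc ‖f r τ j‖ ≤ 1 := hfb r τ j
        _ ≤ 1 * Real.exp (ε' * wgt m n σ μ τ j) := by linarith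
    obtain ⟨u, hugrow, hueq⟩ := hsolv f hadm hfg
    obtain ⟨C, hCpos, hC⟩ := hugrow e2 he2pos
    refine ⟨1 / C, by positivity, fun τ j hz => ?_⟩
    have hpos : 0 < symbNorm Q d lam τ j :=
      lt_of_le_of_ne (symbNorm_nonneg hℓ0 Q d lam τ j) (Ne.symm hz)
    set r := Rr (τ, j) with hr
    have hRabs : ‖symb Q d lam r τ j‖ = symbNorm Q d lam τ j := hRr (τ, j)
    have hσr : symb Q d lam r τ j ≠ 0 := by
      intro h; rw [h] at hRabs; simp at hRabs; exact hz hRabs.symm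
    have hug : u τ j = g τ j := by
      have := hueq r τ j
      simp only [hf] at this
      exact mul_left_cancel₀ hσr this
    have habs : ‖u τ j‖
        = Real.exp (-(e2) * wgt m n σ μ τ j) / symbNorm Q d lam τ j := by
      rw [hug]; simp only [hg, Complex.norm_real, Real.norm_eq_abs]
      exact abs_of_nonneg (by positivity)
    have hle := hC τ j
    rw [habs] at hle
    -- from exp(-e2 w)/N ≤ C exp(e2 w) derive N ≥ (1/C) exp(-ε w)
    have hkey : Real.exp (-(e2) * wgt m n σ μ τ j)
        ≤ C * Real.exp (e2 * wgt m n σ μ τ j) * symbNorm Q d lam τ j := by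
      rw [div_le_iff₀ hpos] at hle; linarith
    rw [ge_iff_le, div_mul_eq_mul_div, div_le_iff₀ hCpos]
    have hexp : Real.exp (-ε * wgt m n σ μ τ j) * Real.exp (e2 * wgt m n σ μ τ j)
        = Real.exp (-(e2) * wgt m n σ μ τ j) := by
      rw [← Real.exp_add]; congr 1; rw [he2]; ring
    have hepos : 0 < Real.exp (e2 * wgt m n σ μ τ j) := Real.exp_pos _
    nlinarith [hkey, hexp, hepos]
  · -- DC → Solvable
    intro hdc f hadm hfg
    refine ⟨fun τ j => if symbNorm Q d lam τ j = 0 then 0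
      else f (Rr (τ, j)) τ j / symb Q d lam (Rr (τ, j)) τ j, ?_, ?_⟩
    · -- GS-growth of u
      intro ε hε
      have he2pos : 0 < ε / 2 := by positivity
      obtain ⟨Cd, hCdpos, hCd⟩ := hdc (ε / 2) he2pos
      choose Cf hCfpos hCf using fun r => hfg r (ε / 2) he2pos
      set A : ℝ := ∑ r, Cf r with hA
      have hApos : 0 < A := Finset.sum_pos (fun r _ => hCfpos r) ⟨⟨0, hℓ0⟩, Finset.mem_univ _⟩
      have hAle : ∀ r, Cf r ≤ A := fun r =>
        Finset.single_le_sum (fun s _ => (hCfpos s).le) (Finset.mem_univ r)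
      refine ⟨A / Cd, by positivity, fun τ j => ?_⟩
      by_cases hz : symbNorm Q d lam τ j = 0
      · simp only [if_pos hz, norm_zero]
        exact le_of_lt (mul_pos (div_pos hApos hCdpos) (Real.exp_pos _))
      · have hpos : 0 < symbNorm Q d lam τ j :=
          lt_of_le_of_ne (symbNorm_nonneg hℓ0 Q d lam τ j) (Ne.symm hz)
        set r := Rr (τ, j) with hr
        have hRabs : ‖symb Q d lam r τ j‖ = symbNorm Q d lam τ j := hRr (τ, j)
        simp only [if_neg hz, norm_div, hRabs]
        rw [show ‖symb Q d lam (Rr (τ, j)) τ j‖ = symbNorm Q d lam τ j from hRr (τ, j)]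
        have hnum : ‖f r τ j‖ ≤ A * Real.exp (ε / 2 * wgt m n σ μ τ j) :=
          le_trans (hCf r τ j) (mul_le_mul_of_nonneg_right (hAle r) (Real.exp_pos _).le)
        have hden : Cd * Real.exp (-(ε / 2) * wgt m n σ μ τ j) ≤ symbNorm Q d lam τ j := hCd τ j hz
        have hdpos : 0 < Cd * Real.exp (-(ε / 2) * wgt m n σ μ τ j) := by positivity
        calc ‖f r τ j‖ / symbNorm Q d lam τ j
            ≤ (A * Real.exp (ε / 2 * wgt m n σ μ τ j)) /
              (Cd * Real.exp (-(ε / 2) * wgt m n σ μ τ j)) :=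
              div_le_div₀ (by positivity) hnum hdpos hden
          _ = A / Cd * Real.exp (ε * wgt m n σ μ τ j) := by
              have hq : Real.exp (ε / 2 * wgt m n σ μ τ j) /
                  Real.exp (-(ε / 2) * wgt m n σ μ τ j)
                  = Real.exp (ε * wgt m n σ μ τ j) := by
                rw [← Real.exp_sub]; congr 1; ring
              rw [← hq, div_mul_div_comm]
    · -- the equations
      intro r τ j
      by_cases hz : symbNorm Q d lam τ j = 0
      · have hσr : symb Q d lam r τ j = 0 := by
          have : ‖symb Q d lam r τ j‖ = 0 := le_antisymm
            (hz ▸ abs_symb_le_symbNorm Q d lam r τ j) (norm_nonneg _)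
          exact norm_eq_zero.mp this
        simp [hz, hσr, hadm.2 r τ j hσr]
      · have hRabs : ‖symb Q d lam (Rr (τ, j)) τ j‖ = symbNorm Q d lam τ j :=
          hRr (τ, j)
        have hσR : symb Q d lam (Rr (τ, j)) τ j ≠ 0 := by
          intro h; rw [h] at hRabs; simp at hRabs; exact hz hRabs.symm
        simp only [if_neg hz]
        rw [← mul_div_assoc, hadm.1 r (Rr (τ, j)) τ j, mul_div_cancel_left₀ _ hσR]
end

section
/- Suppose the zero set N := {(τ,j) ∈ ℤ^m × ℕ : ‖σ(τ,j)‖ = 0} is infinite, and let u : ℤ^m×ℕ → ℂ be the indicator function of N (u(τ,j) = 1 if (τ,j) ∈ N and u(τ,j) = 0 otherwise). Then u has GS-growth, u does not have GS-decay, and σ_r(τ,j)·u(τ,j) = 0 for every 1 ≤ r ≤ ℓ and every (τ,j); in particular, the system is not globally hypoelliptic at the Fourier coefficient level. -/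
open Real

lemma eNormZ_nonneg {m : ℕ} (τ : Fin m → ℤ) : 0 ≤ eNormZ τ := Real.sqrt_nonneg _

lemma abs_le_eNormZ {m : ℕ} (τ : Fin m → ℤ) (i : Fin m) : |(τ i : ℝ)| ≤ eNormZ τ := by
  rw [eNormZ, ← Real.sqrt_sq_eq_abs]
  exact Real.sqrt_le_sqrt (Finset.single_le_sum (f := fun k => ((τ k : ℝ))^2) (fun k _ => sq_nonneg _) (Finset.mem_univ i))

lemma sublevel_finite (m n : ℕ) (hn : 1 ≤ n) (σ μ : ℝ) (hσ : 1 ≤ σ) (hμ : 1 / 2 ≤ μ)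
    (K : ℝ) : {p : (Fin m → ℤ) × ℕ | wgt m n σ μ p.1 p.2 ≤ K}.Finite := by
  have hσ0 : (0:ℝ) < σ := lt_of_lt_of_le one_pos hσ
  have he0 : (0:ℝ) < 2 * n * μ := by
    have : (1:ℝ) ≤ n := by exact_mod_cast hn
    nlinarith
  set K' : ℝ := max K 0 with hK'
  set B : ℤ := ⌈K' ^ σ⌉ with hB
  set N : ℕ := ⌈K' ^ (2 * n * μ)⌉₊ with hNdef
  have : {p : (Fin m → ℤ) × ℕ | wgt m n σ μ p.1 p.2 ≤ K} ⊆
      (Set.pi Set.univ fun _ : Fin m => Set.Icc (-B) B) ×ˢ Set.Iic N := by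
    rintro ⟨τ, j⟩ hp
    simp only [Set.mem_setOf_eq] at hp
    have h1 : eNormZ τ ^ (1 / σ) ≤ K' :=
      le_max_of_le_left (le_trans (le_add_of_nonneg_right
        (Real.rpow_nonneg (Nat.cast_nonneg j) _)) hp)
    have h2 : (j : ℝ) ^ (1 / (2 * n * μ)) ≤ K' :=
      le_max_of_le_left (le_trans (le_add_of_nonneg_left
        (Real.rpow_nonneg (eNormZ_nonneg τ) _)) hp)
    have hK'0 : 0 ≤ K' := le_max_right _ _
    have hτ : eNormZ τ ≤ K' ^ σ := by
      have := Real.rpow_le_rpow (Real.rpow_nonneg (eNormZ_nonneg τ) _) h1 hσ0.le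
      rw [← Real.rpow_mul (eNormZ_nonneg τ), one_div_mul_cancel hσ0.ne',
        Real.rpow_one] at this
      exact this
    have hj : (j : ℝ) ≤ K' ^ (2 * n * μ) := by
      have := Real.rpow_le_rpow (Real.rpow_nonneg (Nat.cast_nonneg j) _) h2 he0.le
      rw [← Real.rpow_mul (Nat.cast_nonneg j), one_div_mul_cancel he0.ne',
        Real.rpow_one] at this
      exact this
    constructor
    · intro i _
      have hi : |(τ i : ℝ)| ≤ K' ^ σ := le_trans (abs_le_eNormZ τ i) hτ
      rw [abs_le] at hi
      constructor
      · have : -((B : ℝ)) ≤ (τ i : ℝ) := le_trans (neg_le_neg (Int.le_ceil _)) hi.1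
        exact_mod_cast this
      · have : (τ i : ℝ) ≤ (B : ℝ) := le_trans hi.2 (Int.le_ceil _)
        exact_mod_cast this
    · have : (j : ℝ) ≤ (N : ℝ) := le_trans hj (Nat.le_ceil _)
      exact_mod_cast this
  exact Set.Finite.subset (Set.Finite.prod (Set.Finite.pi fun _ => Set.finite_Icc _ _)
    (Set.finite_Iic _)) this

lemma symb_eq_zero_of_symbNorm {m ℓ : ℕ} (hℓ : 1 ≤ ℓ) (Q : Fin ℓ → MvPolynomial (Fin m) ℂ)
    (d : Fin ℓ → ℂ) (lam : ℕ → ℝ) (τ : Fin m → ℤ) (j : ℕ)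
    (h : symbNorm Q d lam τ j = 0) (r : Fin ℓ) : symb Q d lam r τ j = 0 := by
  haveI : Nonempty (Fin ℓ) := ⟨⟨0, hℓ⟩⟩
  have hle : ‖symb Q d lam r τ j‖ ≤ symbNorm Q d lam τ j := by
    rw [symbNorm]
    exact le_ciSup (Set.Finite.bddAbove (Set.finite_range
      (fun r => ‖symb Q d lam r τ j‖))) r
  rw [h] at hle
  have := le_antisymm hle (norm_nonneg _)
  exact norm_eq_zero.mp this

/-- if the zero set `N` is infinite, then its indicator function has
GS-growth but not GS-decay, is annihilated by all the symbols, and hence the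
system is not globally hypoelliptic. -/
theorem statement8 (m n ℓ : ℕ) (hm : 1 ≤ m) (hn : 1 ≤ n) (hℓ : 1 ≤ ℓ)
    (σ μ : ℝ) (hσ : 1 ≤ σ) (hμ : 1 / 2 ≤ μ)
    (Q : Fin ℓ → MvPolynomial (Fin m) ℂ) (d : Fin ℓ → ℂ) (lam : ℕ → ℝ)
    (hN : {p : (Fin m → ℤ) × ℕ | symbNorm Q d lam p.1 p.2 = 0}.Infinite)
    (u : (Fin m → ℤ) → ℕ → ℂ)
    (hu : ∀ τ j, u τ j = if symbNorm Q d lam τ j = 0 then 1 else 0) :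
    GSGrowth m n σ μ u ∧ ¬ GSDecay m n σ μ u ∧
      (∀ (r : Fin ℓ) τ j, symb Q d lam r τ j * u τ j = 0) ∧
      ¬ GloballyHypoelliptic m n ℓ σ μ Q d lam := by
  have hgrowth : GSGrowth m n σ μ u := by
    intro ε hε
    refine ⟨1, one_pos, fun τ j => ?_⟩
    rw [hu]
    have hexp : 1 ≤ Real.exp (ε * wgt m n σ μ τ j) := by
      rw [← Real.exp_zero]
      exact Real.exp_le_exp.mpr (mul_nonneg hε.le (wgt_nonneg m n σ μ τ j))
    split
    · simpa using hexp
    · simp [le_trans zero_le_one hexp]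
  have hzero : ∀ (r : Fin ℓ) τ j, symb Q d lam r τ j * u τ j = 0 := by
    intro r τ j
    rw [hu]
    split
    · rename_i h
      rw [symb_eq_zero_of_symbNorm hℓ Q d lam τ j h r, zero_mul]
    · rw [mul_zero]
  have hnodecay : ¬ GSDecay m n σ μ u := by
    rintro ⟨C, hC, ε, hε, h⟩
    apply hN
    apply Set.Finite.subset (sublevel_finite m n hn σ μ hσ hμ (Real.log C / ε))
    rintro ⟨τ, j⟩ hp
    simp only [Set.mem_setOf_eq] at hp ⊢
    have h1 : (1:ℝ) ≤ C * Real.exp (-ε * wgt m n σ μ τ j) := by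
      have := h τ j
      rw [hu, if_pos hp] at this
      simpa using this
    have hle : Real.exp (ε * wgt m n σ μ τ j) ≤ C := by
      have hpos : 0 < Real.exp (-ε * wgt m n σ μ τ j) := Real.exp_pos _
      have := mul_le_mul_of_nonneg_right h1 (Real.exp_pos (ε * wgt m n σ μ τ j)).le
      rwa [one_mul, mul_assoc, ← Real.exp_add, neg_mul, neg_add_cancel,
        Real.exp_zero, mul_one] at this
    have := (Real.le_log_iff_exp_le hC).mpr hle
    exact (le_div_iff₀ hε).mpr (by linarith [this])
  refine ⟨hgrowth, hnodecay, hzero, ?_⟩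
  intro hGH
  apply hnodecay
  apply hGH u hgrowth
  intro r
  refine ⟨1, one_pos, 1, one_pos, fun τ j => ?_⟩
  simp only [hzero r τ j, map_zero, norm_zero, one_mul]
  exact (Real.exp_pos (-1 * wgt m n σ μ τ j)).le
end
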